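/- Let g be an orientation-preserving circle homeomorphism with a fixed point p, whose lift g̃ fixing the lifts of fixed points moves some point to the right by a distance d > 0. Then there exists ε > 0 such that every homeomorphism h with ‖h − g‖_{C⁰} < ε has rotation number in [0, 1/2] (mod ℤ). -/

import Mathlib

open Filter Topology Set

noncomputable section

abbrev S1 : Type := AddCircle (1 : ℝ)

/-- `F : ℝ → ℝ` is a lift of the orientation-preserving circle map `f`. -/
def IsLiftOf (F : ℝ → ℝ) (f : S1 → S1) : Prop :=
  StrictMono F ∧ Continuous F ∧ (∀ x, F (x + 1) = F x + 1) ∧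
    ∀ x : ℝ, ((F x : ℝ) : S1) = f (x : S1)

/-- `τ` is the translation number of the lift `F`. -/
def HasTransNum (F : ℝ → ℝ) (τ : ℝ) : Prop :=
  Tendsto (fun n : ℕ => F^[n] 0 / (n : ℝ)) atTop (𝓝 τ)

/-- `r` is the rotation number of the circle map `f`. -/
def HasRotNum (f : S1 → S1) (r : S1) : Prop :=
  ∃ F τ, IsLiftOf F f ∧ HasTransNum F τ ∧ ((τ : ℝ) : S1) = r

lemma round_eq_of_abs_sub_lt {t : ℝ} {n : ℤ} (h : |t - n| < 1/2) : round t = n := by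
  have h1 := abs_lt.1 h
  rw [round_eq]
  refine Int.floor_eq_iff.2 ⟨by linarith [h1.1], by linarith [h1.2]⟩

lemma int_coe_eq_zero (m : ℤ) : (((m : ℝ)) : S1) = 0 := by
  rw [show ((m:ℝ) : S1) = (QuotientAddGroup.mk (m:ℝ)) from rfl, QuotientAddGroup.eq_zero_iff]
  exact ⟨m, by simp⟩

/-- If `g` has a fixed point and its lift fixing lifts of fixed points moves some
point to the right by `d > 0`, then all homeomorphisms `C⁰`-close to `g` have
rotation number in `[0, 1/2]` (mod ℤ). -/
theorem rotNum_half_interval (g : S1 → S1) (G : ℝ → ℝ) (hG : IsLiftOf G g)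
    (hfixlift : ∀ x : ℝ, g (x : S1) = (x : S1) → G x = x)
    (p : S1) (hp : g p = p)
    (d : ℝ) (hd : 0 < d) (x₀ : ℝ) (hx₀ : G x₀ = x₀ + d) :
    ∃ ε > 0, ∀ h : S1 → S1, (∃ H, IsLiftOf H h) →
      (∀ x, dist (g x) (h x) < ε) →
      ∃ τ : ℝ, 0 ≤ τ ∧ τ ≤ 1 / 2 ∧ HasRotNum h ((τ : ℝ) : S1) := by
  obtain ⟨hGmono, hGcont, hGper, hGlift⟩ := hG
  -- a lift of the fixed point
  obtain ⟨xp, hxp⟩ : ∃ xp : ℝ, (xp : S1) = p := Quotient.exists_rep p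
  have hGxp : G xp = xp := hfixlift xp (by rw [hxp, hp])
  -- choose γ by continuity of G at xp
  have hlt : G xp < xp + 1/2 := by rw [hGxp]; linarith
  have hev : ∀ᶠ y in 𝓝 xp, G y < xp + 1/2 :=
    (hGcont.tendsto xp).eventually_lt_const hlt
  obtain ⟨δ, hδ0, hδ⟩ := Metric.eventually_nhds_iff.1 hev
  set γ : ℝ := min (δ/2) (1/2) with hγdef
  have hγ0 : 0 < γ := lt_min (by linarith) (by norm_num)
  have hγhalf : γ ≤ 1/2 := min_le_right _ _
  have hγG : G (xp + γ) < xp + 1/2 := by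
    apply hδ
    rw [Real.dist_eq]
    have : γ ≤ δ/2 := min_le_left _ _
    rw [abs_of_pos (by linarith : (0:ℝ) < xp + γ - xp)] at *
    simp only [add_sub_cancel_left]
    linarith
  refine ⟨min (γ/2) (d/2), lt_min (by linarith) (by linarith), ?_⟩
  intro h ⟨H, hH⟩ hclose
  obtain ⟨hHmono, hHcont, hHper, hHlift⟩ := hH
  set ε : ℝ := min (γ/2) (d/2) with hεdef
  have hε0 : 0 < ε := lt_min (by linarith) (by linarith)
  have hεγ : ε ≤ γ/2 := min_le_left _ _
  have hεd : ε ≤ d/2 := min_le_right _ _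
  have hε4 : ε ≤ 1/4 := by
    calc ε ≤ γ/2 := hεγ
    _ ≤ 1/4 := by linarith
  -- the difference function and its rounding
  set φ : ℝ → ℝ := fun x => G x - H x with hφdef
  have hφcont : Continuous φ := hGcont.sub hHcont
  have hdist : ∀ x : ℝ, |φ x - round (φ x)| < ε := by
    intro x
    have := hclose (x : S1)
    rw [← hGlift x, ← hHlift x, dist_eq_norm, ← QuotientAddGroup.mk_sub] at this
    have hnorm : ‖((G x - H x : ℝ) : S1)‖ = |(G x - H x) - round (G x - H x)| :=
      UnitAddCircle.norm_eq
    rw [hnorm] at this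
    exact this
  -- round ∘ φ is locally constant, hence constant
  have hlc : IsLocallyConstant (fun x => round (φ x)) := by
    rw [IsLocallyConstant.iff_exists_open]
    intro x
    have hev' : ∀ᶠ y in 𝓝 x, |φ y - φ x| < 1/4 := by
      have : Tendsto (fun y => |φ y - φ x|) (𝓝 x) (𝓝 |φ x - φ x|) :=
        ((hφcont.tendsto x).sub tendsto_const_nhds).abs
      simp only [sub_self, abs_zero] at this
      exact this.eventually_lt_const (by norm_num)
    obtain ⟨U, hU, hUopen, hxU⟩ := eventually_nhds_iff.1 hev'
    refine ⟨U, hUopen, hxU, fun y hy => ?_⟩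
    apply round_eq_of_abs_sub_lt
    have h1 := hdist x
    have h2 := hU y hy
    have : |φ y - round (φ x)| < 1/2 := by
      calc |φ y - round (φ x)| ≤ |φ y - φ x| + |φ x - round (φ x)| := by
            have := abs_sub_le (φ y) (φ x) ((round (φ x) : ℝ)); linarith [this]
      _ < 1/4 + ε := by linarith
      _ ≤ 1/2 := by linarith
    exact this
  set m : ℤ := round (φ 0) with hmdef
  have hconst : ∀ x, round (φ x) = m := fun x => congrFun (hlc.eq_const 0) x
  -- shifted lift
  set H' : ℝ → ℝ := fun x => H x + m with hH'def
  have hclose' : ∀ x, |G x - H' x| < ε := by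
    intro x
    have := hdist x
    rw [hconst x] at this
    simpa [hH'def, hφdef, sub_sub] using this
  have hH'mono : StrictMono H' := fun a b hab => by
    simp only [hH'def]; exact add_lt_add_of_lt_of_le (hHmono hab) le_rfl
  have hH'per : ∀ x, H' (x + 1) = H' x + 1 := by
    intro x; simp only [hH'def, hHper]; ring
  have hH'lift : IsLiftOf H' h := by
    refine ⟨hH'mono, (hHcont.add continuous_const), hH'per, fun x => ?_⟩
    rw [← hHlift x]
    show ((H x + (m:ℝ) : ℝ) : S1) = ((H x : ℝ) : S1)
    rw [QuotientAddGroup.mk_add, int_coe_eq_zero, add_zero]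
  -- package as CircleDeg1Lift
  set F : CircleDeg1Lift := ⟨⟨H', hH'mono.monotone⟩, hH'per⟩ with hFdef
  have hFcoe : ∀ x, F x = H' x := fun _ => rfl
  set τ : ℝ := F.translationNumber with hτdef
  -- basic inequalities from closeness
  have hub : ∀ x, H' x < G x + ε := fun x => by
    have := (abs_lt.1 (hclose' x)).1; linarith
  have hlb : ∀ x, G x - ε < H' x := fun x => by
    have := (abs_lt.1 (hclose' x)).2; linarith
  -- upper bound : τ ≤ 1/2
  have hτhalf : τ ≤ 1/2 := by
    have h1 : H' xp ≤ xp + γ := by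
      have := hub xp; rw [hGxp] at this; linarith
    have h2 : (F ^ 2) xp ≤ xp + (1 : ℤ) := by
      have e : (F ^ 2) xp = H' (H' xp) := by
        rw [sq]; rfl
      rw [e]
      have h3 : H' (H' xp) ≤ H' (xp + γ) := hH'mono.monotone h1
      have h4 : H' (xp + γ) < G (xp + γ) + ε := hub _
      push_cast
      linarith [hγG]
    have h5 := CircleDeg1Lift.translationNumber_le_of_le_add_int (F ^ 2) h2
    rw [CircleDeg1Lift.translationNumber_pow] at h5
    push_cast at h5
    rw [hτdef]
    linarith
  -- lower bound : 0 ≤ τ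
  have hτ0 : 0 ≤ τ := by
    by_cases hc : ∀ x, x ≤ H' x
    · exact CircleDeg1Lift.le_translationNumber_of_add_le F (fun x => by
        rw [add_zero]; exact hc x)
    · push_neg at hc
      obtain ⟨z, hz⟩ := hc
      have hx₀' : x₀ < H' x₀ := by
        have := hlb x₀; rw [hx₀] at this; linarith
      -- intermediate value: H' has a fixed point
      have hψ : Continuous (fun x => H' x - x) := (hHcont.add continuous_const).sub continuous_id
      have hmem : (0:ℝ) ∈ Icc (H' z - z) (H' x₀ - x₀) := ⟨by linarith, by linarith⟩
      obtain ⟨c, hc⟩ := intermediate_value_univ z x₀ hψ hmem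
      have hc' : H' c - c = 0 := hc
      have hfix : F c = c + (0 : ℤ) := by
        rw [hFcoe]; push_cast; linarith
      have := CircleDeg1Lift.translationNumber_of_eq_add_int F hfix
      rw [hτdef, this]; norm_num
  -- conclusion
  refine ⟨τ, hτ0, hτhalf, H', τ, hH'lift, ?_, rfl⟩
  have := F.tendsto_translation_number₀
  refine this.congr fun n => ?_
  rw [CircleDeg1Lift.coe_pow]
  rfl
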